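/- Let d be a metric on probability measures such that d^p is jointly convex for some p ∈ [1,∞), and suppose there is a modulus of continuity η(x,δ) satisfying d(αP+(1-α)Q, α'P+(1-α')Q) ≤ η(d(P,Q),|α-α'|) for all P,Q and α,α' ∈ [0,1], with sup_{0≤x≤M} η(x,δ) → 0 as δ→0 for every M < ∞. If α_n, α_n' ∈ [0,1] with |α_n-α_n'| → 0, d(P_n,P_n') → 0, d(Q_n,Q_n') → 0, and sup_n d(P_n',Q_n') < ∞, then d(α_n P_n + (1-α_n)Q_n, α_n' P_n' + (1-α_n')Q_n') → 0. -/

import Mathlib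

open MeasureTheory Filter Topology

/-- The mixture `a • P + (1-a) • Q` of two measures on `ℝ`, for `a ∈ [0,1]`. -/
noncomputable def mixM (a : ℝ) (P Q : MeasureTheory.Measure ℝ) : MeasureTheory.Measure ℝ :=
  ENNReal.ofReal a • P + ENNReal.ofReal (1 - a) • Q

/-- if `d` is a metric on probability measures such that `d^p` is jointly
convex for some `p ∈ [1,∞)`, and there is a modulus of continuity `η` controlling the
dependence of mixtures on the mixing coefficient, then mixtures are jointly continuous in
the weights and the components. -/
theorem mixture_continuity
    (d : Measure ℝ → Measure ℝ → ℝ) (p : ℝ) (hp : 1 ≤ p)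
    (hd_nonneg : ∀ P Q, 0 ≤ d P Q)
    (hd_symm : ∀ P Q, d P Q = d Q P)
    (hd_triangle : ∀ P Q R, d P R ≤ d P Q + d Q R)
    (hconvex : ∀ a : ℝ, a ∈ Set.Icc (0:ℝ) 1 → ∀ P P' Q Q' : Measure ℝ,
      d (mixM a P Q) (mixM a P' Q') ^ p ≤ a * d P P' ^ p + (1 - a) * d Q Q' ^ p)
    (η : ℝ → ℝ → ℝ)
    (hη : ∀ P Q : Measure ℝ, ∀ a a' : ℝ, a ∈ Set.Icc (0:ℝ) 1 → a' ∈ Set.Icc (0:ℝ) 1 →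
      d (mixM a P Q) (mixM a' P Q) ≤ η (d P Q) |a - a'|)
    (hη_unif : ∀ M : ℝ, ∀ ε > (0:ℝ), ∃ δ₀ > (0:ℝ), ∀ δ : ℝ, 0 ≤ δ → δ < δ₀ →
      ∀ x : ℝ, 0 ≤ x → x ≤ M → η x δ < ε)
    (a a' : ℕ → ℝ) (P P' Q Q' : ℕ → Measure ℝ)
    (ha : ∀ n, a n ∈ Set.Icc (0:ℝ) 1) (ha' : ∀ n, a' n ∈ Set.Icc (0:ℝ) 1)
    (hαconv : Tendsto (fun n => |a n - a' n|) atTop (𝓝 0))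
    (hPconv : Tendsto (fun n => d (P n) (P' n)) atTop (𝓝 0))
    (hQconv : Tendsto (fun n => d (Q n) (Q' n)) atTop (𝓝 0))
    (hbdd : ∃ M : ℝ, ∀ n, d (P' n) (Q' n) ≤ M) :
    Tendsto (fun n => d (mixM (a n) (P n) (Q n)) (mixM (a' n) (P' n) (Q' n)))
      atTop (𝓝 0) := by
  obtain ⟨M, hM⟩ := hbdd
  have hp0 : (0:ℝ) < p := lt_of_lt_of_le one_pos hp
  set g : ℕ → ℝ := fun n => (a n * d (P n) (P' n) ^ p + (1 - a n) * d (Q n) (Q' n) ^ p) ^ (1/p)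
    with hg_def
  set h : ℕ → ℝ := fun n => η (d (P' n) (Q' n)) |a n - a' n| with hh_def
  have hnn : ∀ n, 0 ≤ d (mixM (a n) (P n) (Q n)) (mixM (a' n) (P' n) (Q' n)) :=
    fun n => hd_nonneg _ _
  have hub : ∀ n, d (mixM (a n) (P n) (Q n)) (mixM (a' n) (P' n) (Q' n)) ≤ g n + h n := by
    intro n
    have hc := hconvex (a n) (ha n) (P n) (P' n) (Q n) (Q' n)
    have hd1 : 0 ≤ d (mixM (a n) (P n) (Q n)) (mixM (a n) (P' n) (Q' n)) := hd_nonneg _ _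
    have hdp : 0 ≤ d (mixM (a n) (P n) (Q n)) (mixM (a n) (P' n) (Q' n)) ^ p :=
      Real.rpow_nonneg hd1 p
    have t1 : d (mixM (a n) (P n) (Q n)) (mixM (a n) (P' n) (Q' n)) ≤ g n := by
      have key : (d (mixM (a n) (P n) (Q n)) (mixM (a n) (P' n) (Q' n)) ^ p) ^ (1/p)
          ≤ g n := Real.rpow_le_rpow hdp hc (by positivity)
      rwa [← Real.rpow_mul hd1, mul_one_div, div_self hp0.ne', Real.rpow_one] at key
    have t2 : d (mixM (a n) (P' n) (Q' n)) (mixM (a' n) (P' n) (Q' n)) ≤ h n :=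
      hη (P' n) (Q' n) (a n) (a' n) (ha n) (ha' n)
    calc d (mixM (a n) (P n) (Q n)) (mixM (a' n) (P' n) (Q' n))
        ≤ d (mixM (a n) (P n) (Q n)) (mixM (a n) (P' n) (Q' n))
          + d (mixM (a n) (P' n) (Q' n)) (mixM (a' n) (P' n) (Q' n)) := hd_triangle _ _ _
      _ ≤ g n + h n := add_le_add t1 t2
  -- g tends to 0
  have rpow_tendsto : ∀ (f : ℕ → ℝ) (q : ℝ), 0 < q → Tendsto f atTop (𝓝 0) →
      Tendsto (fun n => f n ^ q) atTop (𝓝 0) := by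
    intro f q hq hf
    have := (Real.continuousAt_rpow_const 0 q (Or.inr hq.le)).tendsto.comp hf
    simpa [Function.comp_def, Real.zero_rpow hq.ne'] using this
  have hu : Tendsto (fun n => a n * d (P n) (P' n) ^ p + (1 - a n) * d (Q n) (Q' n) ^ p)
      atTop (𝓝 0) := by
    have hP : Tendsto (fun n => d (P n) (P' n) ^ p) atTop (𝓝 0) := rpow_tendsto _ p hp0 hPconv
    have hQ : Tendsto (fun n => d (Q n) (Q' n) ^ p) atTop (𝓝 0) := rpow_tendsto _ p hp0 hQconv
    have hsum : Tendsto (fun n => d (P n) (P' n) ^ p + d (Q n) (Q' n) ^ p) atTop (𝓝 0) := by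
      simpa using hP.add hQ
    refine squeeze_zero (fun n => ?_) (fun n => ?_) hsum
    · have := (ha n).1; have := (ha n).2
      have h1 : 0 ≤ d (P n) (P' n) ^ p := Real.rpow_nonneg (hd_nonneg _ _) p
      have h2 : 0 ≤ d (Q n) (Q' n) ^ p := Real.rpow_nonneg (hd_nonneg _ _) p
      nlinarith
    · have := (ha n).1; have := (ha n).2
      have h1 : 0 ≤ d (P n) (P' n) ^ p := Real.rpow_nonneg (hd_nonneg _ _) p
      have h2 : 0 ≤ d (Q n) (Q' n) ^ p := Real.rpow_nonneg (hd_nonneg _ _) p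
      nlinarith
  have hg : Tendsto g atTop (𝓝 0) := rpow_tendsto _ (1/p) (by positivity) hu
  have hh : Tendsto h atTop (𝓝 0) := by
    rw [Metric.tendsto_atTop]
    intro ε hε
    obtain ⟨δ₀, hδ₀, hδ⟩ := hη_unif M ε hε
    obtain ⟨N, hN⟩ := Metric.tendsto_atTop.mp hαconv δ₀ hδ₀
    refine ⟨N, fun n hn => ?_⟩
    have hab : |a n - a' n| < δ₀ := by
      have := hN n hn
      rwa [Real.dist_eq, sub_zero, abs_abs] at this
    have hlt : η (d (P' n) (Q' n)) |a n - a' n| < ε :=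
      hδ _ (abs_nonneg _) hab _ (hd_nonneg _ _) (hM n)
    have hge : 0 ≤ h n :=
      le_trans (hd_nonneg _ _) (hη (P' n) (Q' n) (a n) (a' n) (ha n) (ha' n))
    rw [Real.dist_eq, sub_zero, abs_of_nonneg hge]
    exact hlt
  have hgh : Tendsto (fun n => g n + h n) atTop (𝓝 0) := by simpa using hg.add hh
  exact squeeze_zero hnn hub hgh
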